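/- Fix 0 < n₁, n₂ ≤ 2 and let p₁, p₂ ∈ S^{n₁,n₂} be elliptic symbols in S^{n₁,n₂} having the same principal symbol, with Hamiltonian flows (φ₁^t), (φ₂^t). For every T > 0 there exists a constant C = C_T > 0 such that: for every function q = q(t; ρ) on ℝ × ℝ^{2d} which is Lipschitz in ρ uniformly in t (with uniform Lipschitz constant L in the variable ρ) and supported in [−T, T] × ℝ^{2d}, one has |∫_ℝ q(t; φ₂^t(ρ)) dt − ∫_ℝ q(t; φ₁^t(ρ)) dt| ≤ C·L for every ρ ∈ ℝ^{2d}. -/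

import Mathlib

noncomputable section

/-- The phase space `ℝ^{2d} ≃ ℝ^d_x × ℝ^d_ξ`, as a Euclidean space indexed by `Fin d ⊕ Fin d`. -/
abbrev PhaseSpace (d : ℕ) := EuclideanSpace ℝ (Fin d ⊕ Fin d)

/-- The position component `x` of a phase space point `ρ = (x, ξ)`. -/
def posPart {d : ℕ} (ρ : PhaseSpace d) : EuclideanSpace ℝ (Fin d) :=
  WithLp.toLp 2 (fun i => ρ (Sum.inl i))

/-- The momentum component `ξ` of a phase space point `ρ = (x, ξ)`. -/
def momPart {d : ℕ} (ρ : PhaseSpace d) : EuclideanSpace ℝ (Fin d) :=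
  WithLp.toLp 2 (fun i => ρ (Sum.inr i))

/-- The Japanese bracket `⟨x⟩ = (1 + |x|²)^{1/2}`. -/
def jap {E : Type*} [NormedAddCommGroup E] (x : E) : ℝ := Real.sqrt (1 + ‖x‖ ^ 2)

/-- Membership in the symbol class `S^{n₁,n₂}`. -/
def InSymbolClass (d : ℕ) (n₁ n₂ : ℝ) (a : PhaseSpace d → ℝ) : Prop :=
  ContDiff ℝ (⊤ : ℕ∞) a ∧ ∀ k : ℕ, ∃ C > 0, ∀ ρ : PhaseSpace d,
    ‖iteratedFDeriv ℝ k a ρ‖ ≤ C * (jap (posPart ρ) ^ (n₁ - k) + jap (momPart ρ) ^ (n₂ - k))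

/-- Ellipticity in the class `S^{n₁,n₂}`. -/
def IsElliptic (d : ℕ) (n₁ n₂ : ℝ) (a : PhaseSpace d → ℝ) : Prop :=
  ∃ c > 0, ∃ R₀ > 0, ∀ ρ : PhaseSpace d, R₀ ≤ ‖ρ‖ →
    c * (jap (posPart ρ) ^ n₁ + jap (momPart ρ) ^ n₂) ≤ a ρ

/-- The standard symplectic matrix `J` acting on phase space: `J (x, ξ) = (ξ, -x)`. -/
def symplJ {d : ℕ} (ρ : PhaseSpace d) : PhaseSpace d :=
  WithLp.toLp 2 (fun i => match i with
  | Sum.inl j => ρ (Sum.inr j)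
  | Sum.inr j => -ρ (Sum.inl j))

/-- `φ` is the (globally defined) Hamiltonian flow of `p`. -/
def IsHamFlow (d : ℕ) (p : PhaseSpace d → ℝ) (φ : ℝ → PhaseSpace d → PhaseSpace d) : Prop :=
  (∀ ρ, φ 0 ρ = ρ) ∧ ∀ ρ t, HasDerivAt (fun s => φ s ρ) (symplJ (gradient p (φ t ρ))) t

/- ### Auxiliary lemmas -/

lemma symplJ_sub' {d : ℕ} (a b : PhaseSpace d) : symplJ a - symplJ b = symplJ (a - b) := by
  ext i
  cases i <;> simp [symplJ, PiLp.sub_apply] <;> ring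

lemma norm_symplJ' {d : ℕ} (a : PhaseSpace d) : ‖symplJ a‖ = ‖a‖ := by
  rw [EuclideanSpace.norm_eq, EuclideanSpace.norm_eq]
  congr 1
  rw [Fintype.sum_sum_type, Fintype.sum_sum_type]
  simp [symplJ]
  ring

lemma one_le_jap {E : Type*} [NormedAddCommGroup E] (x : E) : 1 ≤ jap x := by
  have h : Real.sqrt 1 ≤ Real.sqrt (1 + ‖x‖ ^ 2) :=
    Real.sqrt_le_sqrt (le_add_of_nonneg_right (sq_nonneg _))
  simpa [jap] using h

lemma jap_rpow_le_one {E : Type*} [NormedAddCommGroup E] (x : E) {e : ℝ} (he : e ≤ 0) :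
    jap x ^ e ≤ 1 :=
  Real.rpow_le_one_of_one_le_of_nonpos (one_le_jap x) he

/-- A global bound on the second iterated derivative makes the gradient Lipschitz. -/
lemma gradient_lipschitz_of_bound {d : ℕ} (p : PhaseSpace d → ℝ)
    (hp : ContDiff ℝ (⊤ : ℕ∞) p) (K : ℝ)
    (hK : ∀ ρ, ‖iteratedFDeriv ℝ 2 p ρ‖ ≤ K) (x y : PhaseSpace d) :
    ‖gradient p x - gradient p y‖ ≤ K * ‖x - y‖ := by
  rw [gradient, gradient, ← map_sub, LinearIsometryEquiv.norm_map]
  have hcd : ContDiff ℝ (⊤ : ℕ∞) (fderiv ℝ p) := hp.fderiv_right (by exact_mod_cast le_top)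
  have hdf : ∀ z ∈ (Set.univ : Set (PhaseSpace d)), DifferentiableAt ℝ (fderiv ℝ p) z :=
    fun z _ => (hcd.differentiable (by simp)).differentiableAt
  have hbd : ∀ z ∈ (Set.univ : Set (PhaseSpace d)), ‖fderiv ℝ (fderiv ℝ p) z‖ ≤ K := by
    intro z _
    have h1 : ‖fderiv ℝ (fderiv ℝ p) z‖ = ‖iteratedFDeriv ℝ 1 (fderiv ℝ p) z‖ := by
      rw [← norm_iteratedFDeriv_fderiv]
      simp [norm_iteratedFDeriv_zero]
    rw [h1, norm_iteratedFDeriv_fderiv]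
    exact hK z
  exact Convex.norm_image_sub_le_of_norm_fderiv_le hdf hbd convex_univ trivial trivial

lemma norm_gradient_le_of_bound {d : ℕ} (p : PhaseSpace d → ℝ) (M : ℝ)
    (hM : ∀ ρ, ‖iteratedFDeriv ℝ 1 p ρ‖ ≤ M) (x : PhaseSpace d) :
    ‖gradient p x‖ ≤ M := by
  rw [gradient, LinearIsometryEquiv.norm_map]
  have h1 : ‖fderiv ℝ p x‖ = ‖iteratedFDeriv ℝ 1 p x‖ := by
    rw [← norm_iteratedFDeriv_fderiv]; simp [norm_iteratedFDeriv_zero]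
  rw [h1]; exact hM x

lemma gradient_sub' {d : ℕ} (p₁ p₂ : PhaseSpace d → ℝ) (hp₁ : ContDiff ℝ (⊤ : ℕ∞) p₁)
    (hp₂ : ContDiff ℝ (⊤ : ℕ∞) p₂) (x : PhaseSpace d) :
    gradient (fun ρ => p₂ ρ - p₁ ρ) x = gradient p₂ x - gradient p₁ x := by
  rw [gradient, gradient, gradient, ← map_sub]
  congr 1
  exact fderiv_fun_sub ((hp₂.differentiable (by simp)) x)
    ((hp₁.differentiable (by simp)) x)

lemma gronwallBound_mono_x {K M x y : ℝ} (hK : 0 < K) (hM : 0 ≤ M) (hxy : x ≤ y) :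
    gronwallBound 0 K M x ≤ gronwallBound 0 K M y := by
  simp only [gronwallBound_of_K_ne_0 hK.ne', zero_mul, zero_add]
  have h1 : Real.exp (K * x) ≤ Real.exp (K * y) :=
    Real.exp_le_exp.2 (by nlinarith)
  have h2 : 0 ≤ M / K := div_nonneg hM hK.le
  nlinarith

/-- Grönwall comparison for the two flows. -/
lemma flow_dist_le {d : ℕ} (p₁ p₂ : PhaseSpace d → ℝ)
    (hp₁ : ContDiff ℝ (⊤ : ℕ∞) p₁) (hp₂ : ContDiff ℝ (⊤ : ℕ∞) p₂)
    (φ₁ φ₂ : ℝ → PhaseSpace d → PhaseSpace d)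
    (hφ₁ : IsHamFlow d p₁ φ₁) (hφ₂ : IsHamFlow d p₂ φ₂)
    (K M : ℝ) (hK : 0 < K) (hM : 0 ≤ M)
    (hlip : ∀ x y, ‖gradient p₁ x - gradient p₁ y‖ ≤ K * ‖x - y‖)
    (hsub : ∀ x, ‖gradient p₂ x - gradient p₁ x‖ ≤ M)
    (T : ℝ) (hT : 0 < T) (ρ : PhaseSpace d) :
    ∀ t ∈ Set.Icc (-T) T, ‖φ₂ t ρ - φ₁ t ρ‖ ≤ gronwallBound 0 K M T := by
  set u : ℝ → PhaseSpace d := fun t => φ₂ t ρ - φ₁ t ρ with hu_def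
  set u' : ℝ → PhaseSpace d :=
    fun t => symplJ (gradient p₂ (φ₂ t ρ)) - symplJ (gradient p₁ (φ₁ t ρ)) with hu'_def
  have hu : ∀ t, HasDerivAt u (u' t) t := fun t => (hφ₂.2 ρ t).sub (hφ₁.2 ρ t)
  have hu0 : u 0 = 0 := by simp [hu_def, hφ₁.1 ρ, hφ₂.1 ρ]
  have hbound : ∀ t, ‖u' t‖ ≤ K * ‖u t‖ + M := by
    intro t
    have h1 : ‖u' t‖ = ‖gradient p₂ (φ₂ t ρ) - gradient p₁ (φ₁ t ρ)‖ := by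
      rw [hu'_def]; simp only; rw [symplJ_sub', norm_symplJ']
    rw [h1]
    have h2 : gradient p₂ (φ₂ t ρ) - gradient p₁ (φ₁ t ρ) =
        (gradient p₂ (φ₂ t ρ) - gradient p₁ (φ₂ t ρ)) +
        (gradient p₁ (φ₂ t ρ) - gradient p₁ (φ₁ t ρ)) := by abel
    calc ‖gradient p₂ (φ₂ t ρ) - gradient p₁ (φ₁ t ρ)‖
        ≤ ‖gradient p₂ (φ₂ t ρ) - gradient p₁ (φ₂ t ρ)‖ +
          ‖gradient p₁ (φ₂ t ρ) - gradient p₁ (φ₁ t ρ)‖ := by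
            rw [h2]; exact norm_add_le _ _
      _ ≤ M + K * ‖u t‖ := add_le_add (hsub _) (hlip _ _)
      _ = K * ‖u t‖ + M := add_comm _ _
  have hcont : Continuous u := by
    apply continuous_iff_continuousAt.2
    intro t; exact (hu t).continuousAt
  -- forward in time
  have hfwd : ∀ t ∈ Set.Icc (0:ℝ) T, ‖u t‖ ≤ gronwallBound 0 K M (t - 0) := by
    apply norm_le_gronwallBound_of_norm_deriv_right_le hcont.continuousOn
      (fun x _ => (hu x).hasDerivWithinAt)
    · simp [hu0]
    · exact fun x _ => hbound x
  -- backward in time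
  have hbwd : ∀ t ∈ Set.Icc (0:ℝ) T, ‖u (-t)‖ ≤ gronwallBound 0 K M (t - 0) := by
    have hg : ∀ s : ℝ, HasDerivAt (fun x => u (-x)) ((-1 : ℝ) • u' (-s)) s := by
      intro s
      exact HasDerivAt.scomp s (hu (-s)) (hasDerivAt_neg s)
    apply norm_le_gronwallBound_of_norm_deriv_right_le
      ((hcont.comp continuous_neg).continuousOn)
      (fun x _ => (hg x).hasDerivWithinAt)
    · simp [hu0]
    · intro x _
      rw [norm_smul]
      simpa using hbound (-x)
  intro t ht
  rcases le_or_gt 0 t with h0 | h0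
  · calc ‖u t‖ ≤ gronwallBound 0 K M (t - 0) := hfwd t ⟨h0, ht.2⟩
      _ ≤ gronwallBound 0 K M T := by
          apply gronwallBound_mono_x hK hM; linarith [ht.2]
  · have : -t ∈ Set.Icc (0:ℝ) T := ⟨by linarith, by linarith [ht.1]⟩
    calc ‖u t‖ = ‖u (-(-t))‖ := by rw [neg_neg]
      _ ≤ gronwallBound 0 K M (-t - 0) := hbwd (-t) this
      _ ≤ gronwallBound 0 K M T := by
          apply gronwallBound_mono_x hK hM; linarith [(this).2]

theorem stmt_2 (d : ℕ) (n₁ n₂ : ℝ) (hn₁ : 0 < n₁) (hn₂ : 0 < n₂)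
    (hn₁' : n₁ ≤ 2) (hn₂' : n₂ ≤ 2)
    (p₁ p₂ : PhaseSpace d → ℝ)
    (hp₁ : InSymbolClass d n₁ n₂ p₁) (hp₂ : InSymbolClass d n₁ n₂ p₂)
    (he₁ : IsElliptic d n₁ n₂ p₁) (he₂ : IsElliptic d n₁ n₂ p₂)
    (hsame : InSymbolClass d (n₁ - 1) (n₂ - 1) (fun ρ => p₂ ρ - p₁ ρ))
    (φ₁ φ₂ : ℝ → PhaseSpace d → PhaseSpace d)
    (hφ₁ : IsHamFlow d p₁ φ₁) (hφ₂ : IsHamFlow d p₂ φ₂)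
    (T : ℝ) (hT : 0 < T) :
    ∃ C > 0, ∀ (q : ℝ → PhaseSpace d → ℝ) (L : ℝ), 0 ≤ L →
      (∀ (t : ℝ) (ρ₁ ρ₂ : PhaseSpace d), |q t ρ₁ - q t ρ₂| ≤ L * ‖ρ₁ - ρ₂‖) →
      (∀ (t : ℝ) (ρ : PhaseSpace d), t ∉ Set.Icc (-T) T → q t ρ = 0) →
      ∀ ρ : PhaseSpace d,
        MeasureTheory.Integrable (fun t => q t (φ₁ t ρ)) →
        MeasureTheory.Integrable (fun t => q t (φ₂ t ρ)) →
        |(∫ t : ℝ, q t (φ₂ t ρ)) - ∫ t : ℝ, q t (φ₁ t ρ)| ≤ C * L := by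
  -- Hessian bound for p₁ : gradient of p₁ is K-Lipschitz
  obtain ⟨K₀, hK₀pos, hK₀⟩ := hp₁.2 2
  set K : ℝ := 2 * K₀ with hK_def
  have hKpos : 0 < K := by positivity
  have hHess : ∀ ρ, ‖iteratedFDeriv ℝ 2 p₁ ρ‖ ≤ K := by
    intro ρ
    calc ‖iteratedFDeriv ℝ 2 p₁ ρ‖
        ≤ K₀ * (jap (posPart ρ) ^ (n₁ - (2:ℕ)) + jap (momPart ρ) ^ (n₂ - (2:ℕ))) := hK₀ ρ
      _ ≤ K₀ * (1 + 1) := by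
          apply mul_le_mul_of_nonneg_left _ hK₀pos.le
          have e₁ : jap (posPart ρ) ^ (n₁ - (2:ℕ)) ≤ 1 :=
            jap_rpow_le_one _ (by push_cast; linarith)
          have e₂ : jap (momPart ρ) ^ (n₂ - (2:ℕ)) ≤ 1 :=
            jap_rpow_le_one _ (by push_cast; linarith)
          linarith
      _ = K := by ring
  have hlip : ∀ x y, ‖gradient p₁ x - gradient p₁ y‖ ≤ K * ‖x - y‖ :=
    gradient_lipschitz_of_bound p₁ hp₁.1 K hHess
  -- bound on the gradient of the difference
  obtain ⟨M₀, hM₀pos, hM₀⟩ := hsame.2 1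
  set M : ℝ := 2 * M₀ with hM_def
  have hMpos : 0 < M := by positivity
  have hgradsub : ∀ x, ‖gradient p₂ x - gradient p₁ x‖ ≤ M := by
    intro x
    rw [← gradient_sub' p₁ p₂ hp₁.1 hp₂.1]
    apply norm_gradient_le_of_bound _ M _ x
    intro ρ
    calc ‖iteratedFDeriv ℝ 1 (fun ρ => p₂ ρ - p₁ ρ) ρ‖
        ≤ M₀ * (jap (posPart ρ) ^ ((n₁-1) - (1:ℕ)) + jap (momPart ρ) ^ ((n₂-1) - (1:ℕ))) :=
          hM₀ ρ
      _ ≤ M₀ * (1 + 1) := by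
          apply mul_le_mul_of_nonneg_left _ hM₀pos.le
          have e₁ : jap (posPart ρ) ^ ((n₁-1) - (1:ℕ)) ≤ 1 :=
            jap_rpow_le_one _ (by push_cast; linarith)
          have e₂ : jap (momPart ρ) ^ ((n₂-1) - (1:ℕ)) ≤ 1 :=
            jap_rpow_le_one _ (by push_cast; linarith)
          linarith
      _ = M := by ring
  -- uniform flow distance bound
  set B : ℝ := gronwallBound 0 K M T + 1 with hB_def
  have hflow : ∀ ρ : PhaseSpace d, ∀ t ∈ Set.Icc (-T) T, ‖φ₂ t ρ - φ₁ t ρ‖ ≤ B := by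
    intro ρ t ht
    have := flow_dist_le p₁ p₂ hp₁.1 hp₂.1 φ₁ φ₂ hφ₁ hφ₂ K M hKpos hMpos.le
      hlip hgradsub T hT ρ t ht
    linarith
  have hBpos : 0 < B := by
    have h0 : (0:ℝ) ≤ gronwallBound 0 K M T :=
      le_trans (norm_nonneg (φ₂ 0 (0:PhaseSpace d) - φ₁ 0 (0:PhaseSpace d)))
        (flow_dist_le p₁ p₂ hp₁.1 hp₂.1 φ₁ φ₂ hφ₁ hφ₂ K M hKpos hMpos.le
          hlip hgradsub T hT 0 0 ⟨by linarith, hT.le⟩)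
    rw [hB_def]; linarith
  refine ⟨2 * T * B, by positivity, ?_⟩
  intro q L hL hqLip hqsupp ρ h₁ h₂
  rw [← MeasureTheory.integral_sub h₂ h₁]
  have key : ∀ t : ℝ, |q t (φ₂ t ρ) - q t (φ₁ t ρ)| ≤
      Set.indicator (Set.Icc (-T) T) (fun _ => L * B) t := by
    intro t
    by_cases ht : t ∈ Set.Icc (-T) T
    · rw [Set.indicator_of_mem ht]
      calc |q t (φ₂ t ρ) - q t (φ₁ t ρ)| ≤ L * ‖φ₂ t ρ - φ₁ t ρ‖ := hqLip t _ _
        _ ≤ L * B := mul_le_mul_of_nonneg_left (hflow ρ t ht) hL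
    · rw [Set.indicator_of_notMem ht, hqsupp t _ ht, hqsupp t _ ht]
      simp
  have hint : MeasureTheory.Integrable
      (Set.indicator (Set.Icc (-T) T) (fun _ => L * B)) := by
    rw [MeasureTheory.integrable_indicator_iff measurableSet_Icc]
    exact MeasureTheory.integrableOn_const (by
      rw [Real.volume_Icc]; exact ENNReal.ofReal_ne_top)
  calc |∫ t : ℝ, (q t (φ₂ t ρ) - q t (φ₁ t ρ))|
      ≤ ∫ t : ℝ, |q t (φ₂ t ρ) - q t (φ₁ t ρ)| := by
        simpa [Real.norm_eq_abs] using
          MeasureTheory.norm_integral_le_integral_norm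
            (fun t => q t (φ₂ t ρ) - q t (φ₁ t ρ)) (μ := MeasureTheory.volume)
    _ ≤ ∫ t : ℝ, Set.indicator (Set.Icc (-T) T) (fun _ => L * B) t :=
        MeasureTheory.integral_mono (h₂.sub h₁).abs hint key
    _ = (L * B) * (2 * T) := by
        rw [MeasureTheory.integral_indicator measurableSet_Icc]
        rw [MeasureTheory.setIntegral_const, MeasureTheory.measureReal_def, Real.volume_Icc, smul_eq_mul,
          ENNReal.toReal_ofReal (by linarith)]
        ring
    _ = 2 * T * B * L := by ring

end
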